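/- For every choice of survival data (any event times Y, censoring indicators Δ, and covariates X), the log partial likelihood L is concave on EuclideanSpace ℝ (Fin p); equivalently, the function β ↦ −L(β) is convex on all of EuclideanSpace ℝ (Fin p). -/

import Mathlib

open Finset

/-- Log-sum-exp of linear functionals is convex. -/
lemma convexOn_logSumExp {p : ℕ} {ι : Type*} (s : Finset ι) (hs : s.Nonempty)
    (X : ι → EuclideanSpace ℝ (Fin p)) :
    ConvexOn ℝ Set.univ
      (fun β : EuclideanSpace ℝ (Fin p) =>
        Real.log (∑ j ∈ s, Real.exp (inner ℝ (X j) β : ℝ))) := by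
  refine ⟨convex_univ, fun x _ y _ a b ha hb hab => ?_⟩
  set u : ι → ℝ := fun j => (inner ℝ (X j) x : ℝ) with hu
  set v : ι → ℝ := fun j => (inner ℝ (X j) y : ℝ) with hv
  have hS : 0 < ∑ j ∈ s, Real.exp (u j) :=
    Finset.sum_pos (fun j _ => Real.exp_pos _) hs
  have hT : 0 < ∑ j ∈ s, Real.exp (v j) :=
    Finset.sum_pos (fun j _ => Real.exp_pos _) hs
  set S := ∑ j ∈ s, Real.exp (u j)
  set T := ∑ j ∈ s, Real.exp (v j)
  have hSab : 0 < S ^ a * T ^ b :=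
    mul_pos (Real.rpow_pos_of_pos hS a) (Real.rpow_pos_of_pos hT b)
  have key : ∑ j ∈ s, Real.exp ((inner ℝ (X j) (a • x + b • y)) : ℝ) ≤ S ^ a * T ^ b := by
    have h1 : ∀ j ∈ s, Real.exp ((inner ℝ (X j) (a • x + b • y)) : ℝ)
        = Real.exp (u j) ^ a * Real.exp (v j) ^ b := by
      intro j _
      rw [inner_add_right, real_inner_smul_right, real_inner_smul_right,
        Real.exp_add, mul_comm a _, mul_comm b _, Real.exp_mul, Real.exp_mul]
    rw [Finset.sum_congr rfl h1]
    have h2 : ∀ j ∈ s, Real.exp (u j) ^ a * Real.exp (v j) ^ b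
        ≤ (S ^ a * T ^ b) * (a * (Real.exp (u j) / S) + b * (Real.exp (v j) / T)) := by
      intro j _
      have := Real.geom_mean_le_arith_mean2_weighted ha hb
        (div_nonneg (Real.exp_pos (u j)).le hS.le)
        (div_nonneg (Real.exp_pos (v j)).le hT.le) hab
      have heq : (Real.exp (u j) / S) ^ a * (Real.exp (v j) / T) ^ b
          = (Real.exp (u j) ^ a * Real.exp (v j) ^ b) / (S ^ a * T ^ b) := by
        rw [Real.div_rpow (Real.exp_pos _).le hS.le,
          Real.div_rpow (Real.exp_pos _).le hT.le]
        ring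
      rw [heq, div_le_iff₀ hSab] at this
      linarith [this]
    calc ∑ j ∈ s, Real.exp (u j) ^ a * Real.exp (v j) ^ b
        ≤ ∑ j ∈ s, (S ^ a * T ^ b) * (a * (Real.exp (u j) / S) + b * (Real.exp (v j) / T)) :=
          Finset.sum_le_sum h2
      _ = S ^ a * T ^ b := by
          rw [← Finset.mul_sum]
          have : ∑ j ∈ s, (a * (Real.exp (u j) / S) + b * (Real.exp (v j) / T))
              = a * (S / S) + b * (T / T) := by
            rw [Finset.sum_add_distrib]
            simp only [div_eq_mul_inv, ← Finset.mul_sum, ← Finset.sum_mul]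
            rfl
          rw [this, div_self hS.ne', div_self hT.ne']
          simp [hab]
  have hpos : 0 < ∑ j ∈ s, Real.exp ((inner ℝ (X j) (a • x + b • y)) : ℝ) :=
    Finset.sum_pos (fun j _ => Real.exp_pos _) hs
  calc Real.log (∑ j ∈ s, Real.exp ((inner ℝ (X j) (a • x + b • y)) : ℝ))
      ≤ Real.log (S ^ a * T ^ b) := Real.log_le_log hpos key
    _ = a * Real.log S + b * Real.log T := by
        rw [Real.log_mul (Real.rpow_pos_of_pos hS a).ne' (Real.rpow_pos_of_pos hT b).ne',
          Real.log_rpow hS, Real.log_rpow hT]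
    _ = a • Real.log S + b • Real.log T := by simp [smul_eq_mul]

lemma concaveOn_finset_sum {ι E : Type*} [AddCommGroup E] [Module ℝ E]
    (t : Finset ι) (f : ι → E → ℝ)
    (h : ∀ i ∈ t, ConcaveOn ℝ Set.univ (f i)) :
    ConcaveOn ℝ Set.univ (fun x => ∑ i ∈ t, f i x) := by
  classical
  induction t using Finset.induction_on with
  | empty => simpa using concaveOn_const (0 : ℝ) convex_univ
  | @insert a s hnotmem ih =>
    simp only [Finset.sum_insert hnotmem]
    exact (h a (Finset.mem_insert_self a s)).add
      (ih fun i hi => h i (Finset.mem_insert_of_mem hi))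

/-- The Cox log partial likelihood. -/
noncomputable def coxLogPartialLik (n p : ℕ) (Y : Fin n → ℝ) (Δ : Fin n → Bool)
    (X : Fin n → EuclideanSpace ℝ (Fin p)) (β : EuclideanSpace ℝ (Fin p)) : ℝ :=
  (1 / (n : ℝ)) * ∑ i ∈ Finset.univ.filter (fun i => Δ i = true),
    ((inner ℝ (X i) β : ℝ) -
      Real.log ((1 / (n : ℝ)) * ∑ j ∈ Finset.univ.filter (fun j => Y i ≤ Y j),
        Real.exp (inner ℝ (X j) β : ℝ)))

/-- For every choice of survival data, the log partial likelihood is concave;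
equivalently, `β ↦ -L β` is convex on all of `EuclideanSpace ℝ (Fin p)`. -/
theorem coxLogPartialLik_concave (n p : ℕ) (hn : 1 ≤ n) (hp : 1 ≤ p)
    (Y : Fin n → ℝ) (Δ : Fin n → Bool) (X : Fin n → EuclideanSpace ℝ (Fin p)) :
    ConcaveOn ℝ Set.univ (coxLogPartialLik n p Y Δ X) ∧
    ConvexOn ℝ Set.univ
      (fun β : EuclideanSpace ℝ (Fin p) => -coxLogPartialLik n p Y Δ X β) := by
  have hn0 : (0 : ℝ) < (n : ℝ) := by exact_mod_cast hn
  have hcinv : (0 : ℝ) < 1 / (n : ℝ) := by positivity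
  have hterm : ∀ i : Fin n, ConcaveOn ℝ Set.univ
      (fun β : EuclideanSpace ℝ (Fin p) =>
        (inner ℝ (X i) β : ℝ) -
          Real.log ((1 / (n : ℝ)) * ∑ j ∈ Finset.univ.filter (fun j => Y i ≤ Y j),
            Real.exp (inner ℝ (X j) β : ℝ))) := by
    intro i
    have hne : (Finset.univ.filter (fun j => Y i ≤ Y j)).Nonempty := ⟨i, by simp⟩
    have hrw : (fun β : EuclideanSpace ℝ (Fin p) =>
        (inner ℝ (X i) β : ℝ) -
          Real.log ((1 / (n : ℝ)) * ∑ j ∈ Finset.univ.filter (fun j => Y i ≤ Y j),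
            Real.exp (inner ℝ (X j) β : ℝ)))
        = fun β : EuclideanSpace ℝ (Fin p) =>
            ((inner ℝ (X i) β : ℝ) - Real.log (1 / (n : ℝ))) -
              Real.log (∑ j ∈ Finset.univ.filter (fun j => Y i ≤ Y j),
                Real.exp (inner ℝ (X j) β : ℝ)) := by
      funext β
      rw [Real.log_mul hcinv.ne'
        (Finset.sum_pos (fun j _ => Real.exp_pos _) hne).ne']
      ring
    rw [hrw]
    have h1 : ConcaveOn ℝ Set.univ
        (fun β : EuclideanSpace ℝ (Fin p) =>
          (inner ℝ (X i) β : ℝ) - Real.log (1 / (n : ℝ))) := by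
      refine ⟨convex_univ, fun x _ y _ a b ha hb hab => le_of_eq ?_⟩
      simp only [inner_add_right, real_inner_smul_right, smul_eq_mul, one_div]
      linear_combination (-Real.log ((n : ℝ)⁻¹)) * hab
    exact h1.sub (convexOn_logSumExp _ hne X)
  have hsum : ConcaveOn ℝ Set.univ
      (fun β : EuclideanSpace ℝ (Fin p) =>
        ∑ i ∈ Finset.univ.filter (fun i => Δ i = true),
          ((inner ℝ (X i) β : ℝ) -
            Real.log ((1 / (n : ℝ)) * ∑ j ∈ Finset.univ.filter (fun j => Y i ≤ Y j),
              Real.exp (inner ℝ (X j) β : ℝ)))) :=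
    concaveOn_finset_sum _ _ (fun i _ => hterm i)
  have hL : ConcaveOn ℝ Set.univ (coxLogPartialLik n p Y Δ X) :=
    hsum.smul hcinv.le
  exact ⟨hL, hL.neg⟩
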